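/- The Ochanine theta function s satisfies: for every z ∈ ℂ such that exp(z) ≠ −q^k for all k ∈ ℤ, one has s(−z) = −s(z) and s(z + 2πiτ) = −s(z); moreover s(z + 2πi) = s(z) for all such z. -/

import Mathlib

open Complex Filter

namespace OchanineAux

/-- The basic product `P q x = ∏_{n ≥ 0} (1 + qⁿ x)`. -/
noncomputable def P (q x : ℂ) : ℂ := ∏' n : ℕ, (1 + q ^ n * x)

lemma summable_log {q : ℂ} (hq : ‖q‖ < 1) (c : ℂ) :
    Summable fun n : ℕ => Complex.log (1 + q ^ n * c) := by
  have hg : Summable fun n : ℕ => (3 / 2 : ℝ) * (‖c‖ * ‖q‖ ^ n) :=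
    (((summable_geometric_of_lt_one (norm_nonneg q) hq).mul_left ‖c‖).mul_left _)
  apply Summable.of_norm_bounded_eventually_nat hg
  have ht : Tendsto (fun n : ℕ => ‖q‖ ^ n * ‖c‖) atTop (nhds 0) := by
    simpa using (tendsto_pow_atTop_nhds_zero_of_lt_one (norm_nonneg q) hq).mul_const ‖c‖
  filter_upwards [ht.eventually_lt_const (show (0:ℝ) < 1/2 by norm_num)] with n hn
  have hb : ‖q ^ n * c‖ ≤ 1 / 2 := by
    rw [norm_mul, norm_pow]; exact hn.le
  calc ‖Complex.log (1 + q ^ n * c)‖ ≤ 3 / 2 * ‖q ^ n * c‖ :=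
        Complex.norm_log_one_add_half_le_self hb
    _ = 3 / 2 * (‖c‖ * ‖q‖ ^ n) := by rw [norm_mul, norm_pow]; ring

lemma multipliable_aux {q : ℂ} (hq : ‖q‖ < 1) (c : ℂ) :
    Multipliable fun n : ℕ => 1 + q ^ n * c := by
  by_cases h : ∀ n : ℕ, 1 + q ^ n * c ≠ 0
  · exact Complex.multipliable_of_summable_log (summable_log hq c)
  · push_neg at h
    obtain ⟨m, hm⟩ := h
    refine ⟨0, ?_⟩
    rw [HasProd]
    refine Filter.Tendsto.congr' ?_ tendsto_const_nhds
    filter_upwards [Filter.eventually_ge_atTop ({m} : Finset ℕ)] with s hs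
    exact (Finset.prod_eq_zero (hs (Finset.mem_singleton_self m)) hm).symm

lemma P_ne {q : ℂ} (hq : ‖q‖ < 1) (c : ℂ) (h : ∀ n : ℕ, 1 + q ^ n * c ≠ 0) :
    P q c ≠ 0 := by
  have h2 := Complex.cexp_tsum_eq_tprod (f := fun n : ℕ => 1 + q ^ n * c) h (summable_log hq c)
  beta_reduce at h2
  have hP : P q c = ∏' n : ℕ, (1 + q ^ n * c) := rfl
  rw [hP, ← h2]
  exact Complex.exp_ne_zero _

lemma hasProd_inv {f : ℕ → ℂ} {a : ℂ} (hf : HasProd f a) (ha : a ≠ 0) :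
    HasProd (fun n => (f n)⁻¹) a⁻¹ := by
  have := Filter.Tendsto.inv₀ hf ha
  simpa only [HasProd, ← Finset.prod_inv_distrib] using this

lemma hasProd_P {q : ℂ} (hq : ‖q‖ < 1) (c : ℂ) :
    HasProd (fun n : ℕ => 1 + q ^ n * c) (P q c) :=
  (multipliable_aux hq c).hasProd

lemma hasProd_P_inv {q : ℂ} (hq : ‖q‖ < 1) (c : ℂ) (h : ∀ n : ℕ, 1 + q ^ n * c ≠ 0) :
    HasProd (fun n : ℕ => (1 + q ^ n * c)⁻¹) (P q c)⁻¹ :=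
  hasProd_inv (hasProd_P hq c) (P_ne hq c h)

lemma P_shift {q : ℂ} (hq : ‖q‖ < 1) (c : ℂ) : P q c = (1 + c) * P q (q * c) := by
  have hm : Multipliable fun n : ℕ => 1 + q ^ (n + 1) * c :=
    (multipliable_aux hq (q * c)).congr fun n => by rw [pow_succ]; ring
  have h : (∏' n : ℕ, (1 + q ^ n * c)) = (1 + q ^ 0 * c) * ∏' n : ℕ, (1 + q ^ (n + 1) * c) :=
    tprod_eq_zero_mul' hm
  rw [P, h, pow_zero, one_mul, P]
  exact congrArg (fun t => (1 + c) * t) (tprod_congr fun n => by rw [pow_succ]; ring)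

lemma P_shift' {q : ℂ} (hq : ‖q‖ < 1) {c d : ℂ} (h : d = q * c) :
    P q c = (1 + c) * P q d := by rw [h]; exact P_shift hq c

lemma one_add_pow_ne {q : ℂ} (hq : ‖q‖ < 1) (n : ℕ) : 1 + q ^ n * (-q) ≠ 0 := by
  intro hx
  have h1 : q ^ (n + 1) = 1 := by rw [pow_succ]; linear_combination -hx
  have h2 : ‖q ^ (n + 1)‖ < 1 := by
    rw [norm_pow]
    exact pow_lt_one₀ (norm_nonneg q) hq (Nat.succ_ne_zero n)
  rw [h1] at h2
  simp at h2

lemma tprod_formula {q : ℂ} (hq : ‖q‖ < 1) (e e' : ℂ)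
    (h1 : ∀ n : ℕ, 1 + q ^ (n + 1) * e ≠ 0) (h2 : ∀ n : ℕ, 1 + q ^ (n + 1) * e' ≠ 0) :
    (∏' n : ℕ, ((1 - q ^ (n + 1) * e) * (1 - q ^ (n + 1) * e') * (1 + q ^ (n + 1)) ^ 2) /
        ((1 + q ^ (n + 1) * e) * (1 + q ^ (n + 1) * e') * (1 - q ^ (n + 1)) ^ 2))
      = P q (-(q * e)) *
          (P q (-(q * e')) *
            (P q q *
              (P q q *
                ((P q (q * e))⁻¹ *
                  ((P q (q * e'))⁻¹ *
                    ((P q (-q))⁻¹ * (P q (-q))⁻¹)))))) := by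
  have g1 : ∀ n : ℕ, 1 + q ^ n * (q * e) ≠ 0 := fun n => by
    have := h1 n
    rwa [show q ^ (n + 1) * e = q ^ n * (q * e) by rw [pow_succ]; ring] at this
  have g2 : ∀ n : ℕ, 1 + q ^ n * (q * e') ≠ 0 := fun n => by
    have := h2 n
    rwa [show q ^ (n + 1) * e' = q ^ n * (q * e') by rw [pow_succ]; ring] at this
  have H : HasProd
      (fun n : ℕ =>
        (1 + q ^ n * (-(q * e))) *
          ((1 + q ^ n * (-(q * e'))) *
            ((1 + q ^ n * q) *
              ((1 + q ^ n * q) *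
                ((1 + q ^ n * (q * e))⁻¹ *
                  ((1 + q ^ n * (q * e'))⁻¹ *
                    ((1 + q ^ n * (-q))⁻¹ * (1 + q ^ n * (-q))⁻¹)))))))
      (P q (-(q * e)) *
          (P q (-(q * e')) *
            (P q q *
              (P q q *
                ((P q (q * e))⁻¹ *
                  ((P q (q * e'))⁻¹ *
                    ((P q (-q))⁻¹ * (P q (-q))⁻¹))))))) :=
    (hasProd_P hq _).mul ((hasProd_P hq _).mul ((hasProd_P hq q).mul ((hasProd_P hq q).mul
      ((hasProd_P_inv hq _ g1).mul ((hasProd_P_inv hq _ g2).mul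
        ((hasProd_P_inv hq _ (one_add_pow_ne hq)).mul
          (hasProd_P_inv hq _ (one_add_pow_ne hq))))))))
  rw [← H.tprod_eq]
  refine tprod_congr fun n => ?_
  have d1 : 1 + q ^ (n + 1) * e ≠ 0 := h1 n
  have d2 : 1 + q ^ (n + 1) * e' ≠ 0 := h2 n
  have d3 : 1 + q ^ n * (-q) ≠ 0 := one_add_pow_ne hq n
  have d4 : 1 - q ^ (n + 1) ≠ 0 := by
    have := one_add_pow_ne hq n
    rwa [show 1 + q ^ n * (-q) = 1 - q ^ (n + 1) by rw [pow_succ]; ring] at this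
  have d5 : 1 + q ^ n * (q * e) ≠ 0 := g1 n
  have d6 : 1 + q ^ n * (q * e') ≠ 0 := g2 n
  have rhs_eq : (1 + q ^ n * (-(q * e))) *
      ((1 + q ^ n * (-(q * e'))) *
        ((1 + q ^ n * q) *
          ((1 + q ^ n * q) *
            ((1 + q ^ n * (q * e))⁻¹ *
              ((1 + q ^ n * (q * e'))⁻¹ *
                ((1 + q ^ n * (-q))⁻¹ * (1 + q ^ n * (-q))⁻¹))))))
      = ((1 + q ^ n * (-(q * e))) * (1 + q ^ n * (-(q * e'))) *
          ((1 + q ^ n * q) * (1 + q ^ n * q))) /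
        ((1 + q ^ n * (q * e)) *
          ((1 + q ^ n * (q * e')) * ((1 + q ^ n * (-q)) * (1 + q ^ n * (-q))))) := by
    rw [div_eq_mul_inv, mul_inv, mul_inv, mul_inv]
    ring
  rw [rhs_eq, div_eq_div_iff
    (mul_ne_zero (mul_ne_zero d1 d2) (pow_ne_zero 2 d4))
    (mul_ne_zero d5 (mul_ne_zero d6 (mul_ne_zero d3 d3)))]
  ring

end OchanineAux

open OchanineAux

/-- The nome `q = exp(2πiτ)`. -/
noncomputable def nome (τ : ℂ) : ℂ := Complex.exp (2 * Real.pi * Complex.I * τ)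

/-- The Ochanine theta function
`s(z) = -2 (1-eᶻ)/(1+eᶻ) ∏_{n ≥ 1} (1-qⁿeᶻ)(1-qⁿe^{-z})(1+qⁿ)²/((1+qⁿeᶻ)(1+qⁿe^{-z})(1-qⁿ)²)`,
where the product over integers `n ≥ 1` is encoded as a product over `n : ℕ`
with exponent `n + 1`. -/
noncomputable def ochanineS (τ : ℂ) (z : ℂ) : ℂ :=
  -2 * ((1 - Complex.exp z) / (1 + Complex.exp z)) *
    ∏' n : ℕ,
      ((1 - nome τ ^ (n + 1) * Complex.exp z) * (1 - nome τ ^ (n + 1) * Complex.exp (-z)) *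
          (1 + nome τ ^ (n + 1)) ^ 2) /
        ((1 + nome τ ^ (n + 1) * Complex.exp z) * (1 + nome τ ^ (n + 1) * Complex.exp (-z)) *
          (1 - nome τ ^ (n + 1)) ^ 2)

set_option maxHeartbeats 1600000 in
theorem ochanineS_transformation (τ : ℂ) (hτ : 0 < τ.im) :
    ∀ z : ℂ, (∀ k : ℤ, Complex.exp z ≠ -(nome τ ^ k)) →
      ochanineS τ (-z) = -ochanineS τ z ∧
      ochanineS τ (z + 2 * Real.pi * Complex.I * τ) = -ochanineS τ z ∧
      ochanineS τ (z + 2 * Real.pi * Complex.I) = ochanineS τ z := by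
  intro z hz
  set q : ℂ := nome τ with hqdef
  set u : ℂ := Complex.exp z with hudef
  set u' : ℂ := Complex.exp (-z) with hu'def
  have hq0 : q ≠ 0 := Complex.exp_ne_zero _
  have hu0 : u ≠ 0 := Complex.exp_ne_zero _
  have hu' : u' = u⁻¹ := by rw [hu'def, hudef, Complex.exp_neg]
  have hqn : ‖q‖ < 1 := by
    rw [hqdef, nome, Complex.norm_exp, Real.exp_lt_one_iff]
    have h : (2 * (Real.pi : ℂ) * Complex.I * τ).re = -(2 * Real.pi * τ.im) := by
      simp [Complex.mul_re, Complex.mul_im]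
    rw [h]
    have := Real.pi_pos
    nlinarith
  -- nonvanishing facts
  have hne : ∀ m : ℤ, 1 + q ^ m * u ≠ 0 := by
    intro m h
    apply hz (-m)
    have hqm : q ^ m ≠ 0 := zpow_ne_zero m hq0
    rw [zpow_neg]
    apply mul_left_cancel₀ hqm
    rw [mul_neg, mul_inv_cancel₀ hqm]
    linear_combination h
  have hne' : ∀ m : ℤ, 1 + q ^ m * u' ≠ 0 := by
    intro m h
    apply hz m
    rw [hu'] at h
    field_simp at h
    linear_combination h
  have hneN : ∀ n : ℕ, 1 + q ^ n * u ≠ 0 := fun n => by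
    have := hne (n : ℤ); rwa [zpow_natCast] at this
  have hneN' : ∀ n : ℕ, 1 + q ^ n * u' ≠ 0 := fun n => by
    have := hne' (n : ℤ); rwa [zpow_natCast] at this
  have h1pu : 1 + u ≠ 0 := by have := hneN 0; simpa using this
  have h1pu' : 1 + u' ≠ 0 := by have := hneN' 0; simpa using this
  have g1 : ∀ n : ℕ, 1 + q ^ n * (q * u) ≠ 0 := fun n => by
    have := hneN (n + 1)
    rwa [show q ^ (n + 1) * u = q ^ n * (q * u) by rw [pow_succ]; ring] at this
  have g1' : ∀ n : ℕ, 1 + q ^ n * (q * u') ≠ 0 := fun n => by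
    have := hneN' (n + 1)
    rwa [show q ^ (n + 1) * u' = q ^ n * (q * u') by rw [pow_succ]; ring] at this
  have g2 : ∀ n : ℕ, 1 + q ^ n * (q * (q * u)) ≠ 0 := fun n => by
    have := hneN (n + 2)
    rwa [show q ^ (n + 2) * u = q ^ n * (q * (q * u)) by rw [pow_add]; ring] at this
  have hB2 : P q (q * (q * u)) ≠ 0 := P_ne hqn _ g2
  have hB1 : P q (q * u) ≠ 0 := P_ne hqn _ g1
  have hD1 : P q (q * u') ≠ 0 := P_ne hqn _ g1'
  have hF : P q (-q) ≠ 0 := P_ne hqn _ (one_add_pow_ne hqn)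
  have h1z : ∀ n : ℕ, 1 + q ^ (n + 1) * u ≠ 0 := fun n => hneN (n + 1)
  have h2z : ∀ n : ℕ, 1 + q ^ (n + 1) * u' ≠ 0 := fun n => hneN' (n + 1)
  have Ez : ochanineS τ z = -2 * ((1 - u) / (1 + u)) *
      (P q (-(q * u)) * (P q (-(q * u')) * (P q q * (P q q * ((P q (q * u))⁻¹ *
        ((P q (q * u'))⁻¹ * ((P q (-q))⁻¹ * (P q (-q))⁻¹))))))) := by
    rw [ochanineS]
    simp only [← hqdef, ← hudef, ← hu'def]
    rw [tprod_formula hqn u u' h1z h2z]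
  have h1pui : 1 + u⁻¹ ≠ 0 := by rw [← hu']; exact h1pu'
  have Enz : ochanineS τ (-z) = -2 * ((1 - u') / (1 + u')) *
      (P q (-(q * u')) * (P q (-(q * u)) * (P q q * (P q q * ((P q (q * u'))⁻¹ *
        ((P q (q * u))⁻¹ * ((P q (-q))⁻¹ * (P q (-q))⁻¹))))))) := by
    rw [ochanineS]
    simp only [neg_neg, ← hqdef, ← hudef, ← hu'def]
    rw [tprod_formula hqn u' u h2z h1z]
  have hodd : ochanineS τ (-z) = -ochanineS τ z := by
    rw [Enz, Ez]
    have key : (1 - u') / (1 + u') = -((1 - u) / (1 + u)) := by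
      rw [hu', ← neg_div, div_eq_div_iff h1pui h1pu]
      have h : u⁻¹ * u = 1 := inv_mul_cancel₀ hu0
      linear_combination (-2 : ℂ) * h
    rw [key]
    ring
  refine ⟨hodd, ?_, ?_⟩
  · -- quasi-periodicity
    have e1 : Complex.exp (z + 2 * Real.pi * Complex.I * τ) = u * q := by
      rw [Complex.exp_add, hqdef, nome, hudef]
    have e2 : Complex.exp (-(z + 2 * Real.pi * Complex.I * τ)) = u' * q⁻¹ := by
      rw [neg_add, Complex.exp_add, Complex.exp_neg (2 * Real.pi * Complex.I * τ),
        hu'def, hqdef, nome]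
    have h1w : ∀ n : ℕ, 1 + q ^ (n + 1) * (u * q) ≠ 0 := fun n => by
      have := hneN (n + 2)
      rwa [show q ^ (n + 2) * u = q ^ (n + 1) * (u * q) by rw [pow_succ]; ring] at this
    have h2w : ∀ n : ℕ, 1 + q ^ (n + 1) * (u' * q⁻¹) ≠ 0 := fun n => by
      have := hneN' n
      rwa [show q ^ n * u' = q ^ (n + 1) * (u' * q⁻¹) by
        rw [pow_succ]; field_simp] at this
    have Ew : ochanineS τ (z + 2 * Real.pi * Complex.I * τ) =
        -2 * ((1 - u * q) / (1 + u * q)) *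
        (P q (-(q * (u * q))) * (P q (-(q * (u' * q⁻¹))) * (P q q * (P q q *
          ((P q (q * (u * q)))⁻¹ * ((P q (q * (u' * q⁻¹)))⁻¹ *
            ((P q (-q))⁻¹ * (P q (-q))⁻¹))))))) := by
      rw [ochanineS]
      simp only [← hqdef]
      rw [e1, e2, tprod_formula hqn (u * q) (u' * q⁻¹) h1w h2w]
    have a1 : -(q * (u * q)) = -(q * (q * u)) := by ring
    have a2 : q * (u * q) = q * (q * u) := by ring
    have a3 : q * (u' * q⁻¹) = u' := by field_simp
    rw [a1, a2, a3] at Ew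
    have s1 : P q (-(q * u)) = (1 + -(q * u)) * P q (-(q * (q * u))) :=
      P_shift' hqn (by ring)
    have s2 : P q (q * u) = (1 + q * u) * P q (q * (q * u)) :=
      P_shift' hqn (by ring)
    have s3 : P q (-u') = (1 + -u') * P q (-(q * u')) :=
      P_shift' hqn (by ring)
    have s4 : P q u' = (1 + u') * P q (q * u') :=
      P_shift' hqn (by ring)
    have heq : ochanineS τ (z + 2 * Real.pi * Complex.I * τ) = ochanineS τ (-z) := by
      rw [Ew, Enz, s3, s4, s1, s2, div_eq_mul_inv, div_eq_mul_inv]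
      simp only [mul_inv]
      ring
    rw [heq, hodd]
  · -- periodicity
    have e3 : Complex.exp (z + 2 * Real.pi * Complex.I) = Complex.exp z := by
      rw [Complex.exp_add, Complex.exp_two_pi_mul_I, mul_one]
    have e4 : Complex.exp (-(z + 2 * Real.pi * Complex.I)) = Complex.exp (-z) := by
      rw [neg_add, Complex.exp_add, Complex.exp_neg (2 * Real.pi * Complex.I),
        Complex.exp_two_pi_mul_I, inv_one, mul_one]
    rw [ochanineS, ochanineS, e3, e4]
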